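/- Consider the control system (x₁,x₂)' = [[1,1],[0,1]](x₁,x₂) + (1,0)u on [0,∞) with the quadratic form Q(x₁,x₂,u) := (1/2)(2x₁² + 2x₁x₂ + x₂² + 2(x₁+x₂)u + u²). Fix x₀ = (x₁⁰, 0) ∈ ℝ². Then the pair given by x̂(t) := (x₁⁰ e^{−t}, 0) and û(t) := −2x₁⁰ e^{−t} solves the control system with x̂(0) = x₀, belongs to L²([0,∞),ℝ²)×L²([0,∞),ℝ), and satisfies ∫₀^∞ Q(x̂₁(t), x̂₂(t), û(t)) dt = (x₁⁰)²/2; moreover, every pair (x,u) with x locally absolutely continuous solving the system with x(0) = x₀ and x ∈ L²([0,∞),ℝ²), u ∈ L²([0,∞),ℝ) satisfies ∫₀^∞ Q(x₁(t), x₂(t), u(t)) dt ≥ (x₁⁰)²/2. -/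

import Mathlib

open MeasureTheory Matrix Filter
open Topology

/-- The quadratic form `Q(x₁,x₂,u) = (1/2)(2x₁² + 2x₁x₂ + x₂² + 2(x₁+x₂)u + u²)` of
Example 3.5. -/
noncomputable def Qex (x1 x2 u : ℝ) : ℝ :=
  (1/2) * (2 * x1 ^ 2 + 2 * x1 * x2 + x2 ^ 2 + 2 * (x1 + x2) * u + u ^ 2)

/-- `(x,u)` solves the control system `(x₁,x₂)' = [[1,1],[0,1]](x₁,x₂) + (1,0)u` on
`[0,∞)` with `x(0) = x₀` (`x` locally absolutely continuous, equation a.e., expressed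
through the equivalent integral equation). -/
def SolvesEx (x₀ : Fin 2 → ℝ) (x : ℝ → Fin 2 → ℝ) (u : ℝ → ℝ) : Prop :=
  x 0 = x₀ ∧ LocallyIntegrableOn u (Set.Ici 0) ∧ ContinuousOn x (Set.Ici 0) ∧
    ∀ t ∈ Set.Ici (0:ℝ), x t = x₀ + ∫ s in (0:ℝ)..t, ![x s 0 + x s 1 + u s, x s 1]

lemma key_sq {T : ℝ} (v : ℝ → ℝ) (hv : IntegrableOn v (Set.Ioc 0 T)) :
    Integrable (fun s => v s * ∫ r in Set.Ioc (0:ℝ) s, v r)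
      (volume.restrict (Set.Ioc 0 T)) ∧
    ∫ s in Set.Ioc (0:ℝ) T, v s * ∫ r in Set.Ioc (0:ℝ) s, v r
      = (∫ r in Set.Ioc (0:ℝ) T, v r) ^ 2 / 2 := by
  set μ := volume.restrict (Set.Ioc (0:ℝ) T) with hμ
  set S : Set (ℝ × ℝ) := {p : ℝ × ℝ | p.2 ≤ p.1} with hS
  have hSm : MeasurableSet S := (isClosed_le continuous_snd continuous_fst).measurableSet
  set g : ℝ → ℝ → ℝ := fun s r => S.indicator (fun p : ℝ × ℝ => v p.1 * v p.2) (s, r) with hg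
  have hgint : Integrable (Function.uncurry g) (μ.prod μ) := by
    have : Function.uncurry g = S.indicator (fun p : ℝ × ℝ => v p.1 * v p.2) := rfl
    rw [this]
    exact (Integrable.mul_prod hv hv).indicator hSm
  have hinner : ∀ s ∈ Set.Ioc (0:ℝ) T,
      (∫ r, g s r ∂μ) = v s * ∫ r in Set.Ioc (0:ℝ) s, v r := by
    intro s hs
    have h1 : (fun r => g s r) = (Set.Iic s).indicator (fun r => v s * v r) := by
      funext r
      by_cases h : r ≤ s <;> simp [hg, Set.indicator_apply, hS, h]
    rw [h1, hμ, setIntegral_indicator measurableSet_Iic, Set.Ioc_inter_Iic,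
      min_eq_right hs.2, integral_const_mul]
  have hI1 : Integrable (fun s => v s * ∫ r in Set.Ioc (0:ℝ) s, v r) μ := by
    refine (hgint.integral_prod_left).congr ?_
    filter_upwards [ae_restrict_mem measurableSet_Ioc] with s hs
    exact hinner s hs
  have hA : (∫ s, (∫ r, g s r ∂μ) ∂μ)
      = ∫ s in Set.Ioc (0:ℝ) T, v s * ∫ r in Set.Ioc (0:ℝ) s, v r := by
    rw [hμ]
    exact setIntegral_congr_fun measurableSet_Ioc fun s hs => hinner s hs
  have hswap : (∫ s, (∫ r, g s r ∂μ) ∂μ) = ∫ r, (∫ s, g s r ∂μ) ∂μ :=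
    integral_integral_swap hgint
  have hC : (∫ r, (∫ s, g s r ∂μ) ∂μ)
      = ∫ r in Set.Ioc (0:ℝ) T,
          v r * ((∫ x in Set.Ioc (0:ℝ) T, v x) - ∫ x in Set.Ioc (0:ℝ) r, v x) := by
    rw [hμ]
    refine setIntegral_congr_fun measurableSet_Ioc fun r hr => ?_
    have h1 : (fun s => g s r) = (Set.Ici r).indicator (fun s => v s * v r) := by
      funext s
      by_cases h : r ≤ s <;> simp [hg, Set.indicator_apply, hS, h]
    have h2 : Set.Ioc (0:ℝ) T ∩ Set.Ici r = Set.Icc r T := by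
      ext y
      simp only [Set.mem_inter_iff, Set.mem_Ioc, Set.mem_Ici, Set.mem_Icc]
      constructor
      · rintro ⟨⟨_, hyT⟩, hry⟩; exact ⟨hry, hyT⟩
      · rintro ⟨hry, hyT⟩; exact ⟨⟨lt_of_lt_of_le hr.1 hry, hyT⟩, hry⟩
    rw [h1, setIntegral_indicator measurableSet_Ici, h2, integral_Icc_eq_integral_Ioc,
      integral_mul_const]
    have h3 : (∫ x in Set.Ioc (0:ℝ) T, v x)
        = (∫ x in Set.Ioc (0:ℝ) r, v x) + ∫ x in Set.Ioc r T, v x := by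
      rw [← setIntegral_union (Set.Ioc_disjoint_Ioc_of_le le_rfl) measurableSet_Ioc
        (hv.mono_set (Set.Ioc_subset_Ioc_right hr.2))
        (hv.mono_set (Set.Ioc_subset_Ioc_left hr.1.le)),
        Set.Ioc_union_Ioc_eq_Ioc hr.1.le hr.2]
    rw [h3]; ring
  have hsub : (∫ r in Set.Ioc (0:ℝ) T,
        v r * ((∫ x in Set.Ioc (0:ℝ) T, v x) - ∫ x in Set.Ioc (0:ℝ) r, v x))
      = (∫ r in Set.Ioc (0:ℝ) T, v r) * (∫ x in Set.Ioc (0:ℝ) T, v x)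
        - ∫ r in Set.Ioc (0:ℝ) T, v r * ∫ x in Set.Ioc (0:ℝ) r, v x := by
    have : (fun r => v r * ((∫ x in Set.Ioc (0:ℝ) T, v x) - ∫ x in Set.Ioc (0:ℝ) r, v x))
        = fun r => v r * (∫ x in Set.Ioc (0:ℝ) T, v x) - v r * ∫ x in Set.Ioc (0:ℝ) r, v x := by
      funext r; ring
    rw [this, integral_sub (hv.mul_const _) hI1, integral_mul_const]
  refine ⟨hI1, ?_⟩
  have := hA.symm.trans (hswap.trans (hC.trans hsub))
  nlinarith [this]

lemma sq_identity {T c : ℝ} (v f : ℝ → ℝ) (hv : IntegrableOn v (Set.Ioc 0 T)) (hT : (0:ℝ) ≤ T)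
    (hf : ∀ s ∈ Set.Icc (0:ℝ) T, f s = c + ∫ r in Set.Ioc (0:ℝ) s, v r) :
    IntegrableOn (fun s => f s * v s) (Set.Ioc 0 T) ∧
    ∫ s in Set.Ioc (0:ℝ) T, f s * v s = (f T ^ 2 - c ^ 2) / 2 := by
  obtain ⟨hI, hkey⟩ := key_sq v hv
  have hcong : Set.EqOn (fun s => f s * v s)
      (fun s => c * v s + v s * ∫ r in Set.Ioc (0:ℝ) s, v r) (Set.Ioc 0 T) := by
    intro s hs
    simp only
    rw [hf s ⟨hs.1.le, hs.2⟩]; ring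
  have hInt : IntegrableOn (fun s => c * v s + v s * ∫ r in Set.Ioc (0:ℝ) s, v r)
      (Set.Ioc 0 T) := (hv.const_mul c).add hI
  have hIfv : IntegrableOn (fun s => f s * v s) (Set.Ioc 0 T) :=
    hInt.congr_fun (fun s hs => (hcong hs).symm) measurableSet_Ioc
  refine ⟨hIfv, ?_⟩
  rw [setIntegral_congr_fun measurableSet_Ioc hcong,
    integral_add (hv.const_mul c) hI, integral_const_mul, hkey, hf T ⟨hT, le_refl T⟩]
  ring

lemma integrableOn_pair {f g : ℝ → ℝ} {s : Set ℝ} (hf : IntegrableOn f s volume)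
    (hg : IntegrableOn g s volume) : IntegrableOn (fun t => ![f t, g t]) s volume := by
  have hcont : Continuous fun p : ℝ × ℝ => ![p.1, p.2] := by
    apply continuous_pi
    intro i
    fin_cases i
    · exact continuous_fst
    · exact continuous_snd
  have hmeas : AEStronglyMeasurable (fun t => ![f t, g t]) (volume.restrict s) :=
    hcont.comp_aestronglyMeasurable (hf.1.prodMk hg.1)
  refine Integrable.mono' (hf.norm.add hg.norm) hmeas ?_
  refine Filter.Eventually.of_forall fun t => ?_
  show ‖![f t, g t]‖ ≤ ‖f t‖ + ‖g t‖
  rw [pi_norm_le_iff_of_nonneg (add_nonneg (norm_nonneg _) (norm_nonneg _))]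
  intro i
  fin_cases i
  · simp only [Fin.mk_zero, Matrix.cons_val_zero, Real.norm_eq_abs]
    linarith [abs_nonneg (g t)]
  · simp only [Fin.mk_one, Matrix.cons_val_one, Matrix.head_cons, Matrix.cons_val_fin_one, Real.norm_eq_abs]
    linarith [abs_nonneg (f t)]

/-- For the initial state `x₀ = (x₁⁰, 0)`, the pair
`x̂(t) = (x₁⁰e^{−t}, 0)`, `û(t) = −2x₁⁰e^{−t}` solves the control system, is admissible,
its cost equals `(x₁⁰)²/2`, and every admissible solving pair has cost `≥ (x₁⁰)²/2`. -/
theorem example_solvable (x₁0 : ℝ) :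
    SolvesEx ![x₁0, 0] (fun t => ![x₁0 * Real.exp (-t), 0])
      (fun t => -2 * x₁0 * Real.exp (-t)) ∧
    MemLp (fun t => ![x₁0 * Real.exp (-t), (0:ℝ)]) 2 (volume.restrict (Set.Ioi 0)) ∧
    MemLp (fun t => -2 * x₁0 * Real.exp (-t)) 2 (volume.restrict (Set.Ioi 0)) ∧
    (∫ t in Set.Ioi (0:ℝ),
        Qex (x₁0 * Real.exp (-t)) 0 (-2 * x₁0 * Real.exp (-t))) = x₁0 ^ 2 / 2 ∧
    ∀ (x : ℝ → Fin 2 → ℝ) (u : ℝ → ℝ), SolvesEx ![x₁0, 0] x u →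
      MemLp x 2 (volume.restrict (Set.Ioi 0)) →
      MemLp u 2 (volume.restrict (Set.Ioi 0)) →
      x₁0 ^ 2 / 2 ≤ ∫ t in Set.Ioi (0:ℝ), Qex (x t 0) (x t 1) (u t) := by
  have hcontv : ∀ c : ℝ, Continuous fun t : ℝ => ![c * Real.exp (-t), (0:ℝ)] := by
    intro c
    apply continuous_pi
    intro i
    fin_cases i
    · simp only [Fin.mk_zero, Matrix.cons_val_zero]
      fun_prop
    · simp only [Fin.mk_one, Matrix.cons_val_one, Matrix.head_cons]
      exact continuous_const
  have hexp2 : IntegrableOn (fun t : ℝ => Real.exp (-2 * t)) (Set.Ioi 0) :=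
    exp_neg_integrableOn_Ioi 0 (by norm_num)
  have hsqeq : ∀ (c : ℝ) (t : ℝ), (c * Real.exp (-t)) ^ 2 = c ^ 2 * Real.exp (-2 * t) := by
    intro c t
    rw [show (-2 * t : ℝ) = (-t) + (-t) by ring, Real.exp_add]
    ring
  have hmem : ∀ c : ℝ, MemLp (fun t : ℝ => c * Real.exp (-t)) 2
      (volume.restrict (Set.Ioi 0)) := by
    intro c
    refine (memLp_two_iff_integrable_sq (Continuous.aestronglyMeasurable (by fun_prop))).2 ?_
    refine (hexp2.const_mul (c ^ 2)).congr ?_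
    filter_upwards with t
    exact (hsqeq c t).symm
  refine ⟨⟨?_, ?_, ?_, ?_⟩, ?_, ?_, ?_, ?_⟩
  · funext i
    fin_cases i <;> simp
  · exact (Continuous.locallyIntegrable (by fun_prop)).locallyIntegrableOn _
  · exact (hcontv x₁0).continuousOn
  · intro t ht
    have hG : ∀ s : ℝ, HasDerivAt (fun r => ![x₁0 * Real.exp (-r), (0:ℝ)])
        ![-(x₁0 * Real.exp (-s)), (0:ℝ)] s := by
      intro s
      rw [hasDerivAt_pi]
      intro i
      fin_cases i
      · simp only [Fin.mk_zero, Matrix.cons_val_zero]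
        have h1 : HasDerivAt (fun r : ℝ => -r) (-1) s := (hasDerivAt_id s).neg
        have h2 := (Real.hasDerivAt_exp (-s)).comp s h1
        have h3 := h2.const_mul x₁0
        exact h3.congr_deriv (by ring)
      · simp only [Fin.mk_one, Matrix.cons_val_one, Matrix.head_cons]
        exact hasDerivAt_const _ _
    have hint_eq : (fun s : ℝ =>
        ![(fun r => ![x₁0 * Real.exp (-r), (0:ℝ)]) s 0 + (fun r => ![x₁0 * Real.exp (-r), (0:ℝ)]) s 1
          + (fun r => -2 * x₁0 * Real.exp (-r)) s, (fun r => ![x₁0 * Real.exp (-r), (0:ℝ)]) s 1])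
        = fun s : ℝ => ![-(x₁0 * Real.exp (-s)), (0:ℝ)] := by
      funext s
      simp only [Matrix.cons_val_zero, Matrix.cons_val_one, Matrix.head_cons]
      have : x₁0 * Real.exp (-s) + 0 + -2 * x₁0 * Real.exp (-s) = -(x₁0 * Real.exp (-s)) := by
        ring
      rw [this]
    have hcont2 : Continuous fun s : ℝ => ![-(x₁0 * Real.exp (-s)), (0:ℝ)] := by
      have := hcontv (-x₁0)
      convert this using 2 with s
      ring
    have hInt : ∫ s in (0:ℝ)..t, ![-(x₁0 * Real.exp (-s)), (0:ℝ)]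
        = ![x₁0 * Real.exp (-t), (0:ℝ)] - ![x₁0 * Real.exp (-0), (0:ℝ)] :=
      intervalIntegral.integral_eq_sub_of_hasDerivAt (fun s _ => hG s)
        (hcont2.intervalIntegrable 0 t)
    rw [hint_eq, hInt]
    funext i
    fin_cases i <;> simp [Real.exp_zero]
  · refine MemLp.of_le (hmem x₁0) ((hcontv x₁0).aestronglyMeasurable) ?_
    filter_upwards with t
    show ‖![x₁0 * Real.exp (-t), (0:ℝ)]‖ ≤ ‖x₁0 * Real.exp (-t)‖
    rw [pi_norm_le_iff_of_nonneg (norm_nonneg _)]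
    intro i
    fin_cases i
    · simp
    · simp
      positivity
  · exact hmem (-2 * x₁0)
  · have hQeq : ∀ t : ℝ, Qex (x₁0 * Real.exp (-t)) 0 (-2 * x₁0 * Real.exp (-t))
        = x₁0 ^ 2 * Real.exp (-2 * t) := by
      intro t
      simp only [Qex]
      rw [show (-2 * t : ℝ) = (-t) + (-t) by ring, Real.exp_add]
      ring
    rw [setIntegral_congr_fun measurableSet_Ioi fun t _ => hQeq t]
    have hderiv : ∀ t ∈ Set.Ici (0:ℝ),
        HasDerivAt (fun t : ℝ => -(x₁0 ^ 2 / 2) * Real.exp (-2 * t))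
          (x₁0 ^ 2 * Real.exp (-2 * t)) t := by
      intro t _
      have h1 : HasDerivAt (fun t : ℝ => -2 * t) (-2) t := by
        simpa using (hasDerivAt_id t).const_mul (-2)
      have h2 := (Real.hasDerivAt_exp (-2 * t)).comp t h1
      have h3 := h2.const_mul (-(x₁0 ^ 2 / 2))
      exact h3.congr_deriv (by ring)
    have htend : Tendsto (fun t : ℝ => -(x₁0 ^ 2 / 2) * Real.exp (-2 * t)) atTop (𝓝 0) := by
      have h0 : Tendsto (fun t : ℝ => Real.exp (-2 * t)) atTop (𝓝 0) := by
        have h1 : Tendsto (fun t : ℝ => (2:ℝ) * t) atTop atTop :=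
          Tendsto.const_mul_atTop (by norm_num) tendsto_id
        have := Real.tendsto_exp_neg_atTop_nhds_zero.comp h1
        refine this.congr fun t => ?_
        simp only [Function.comp_apply]
        congr 1
        ring
      simpa using h0.const_mul (-(x₁0 ^ 2 / 2))
    rw [integral_Ioi_of_hasDerivAt_of_tendsto' (fun t ht => hderiv t ht)
      (hexp2.const_mul (x₁0 ^ 2)) htend]
    norm_num
  · intro x u hsol hx2 hu2
    obtain ⟨hx0, hu_loc, hx_cont, heq⟩ := hsol
    set f : ℝ → ℝ := fun t => x t 0 with hfdef
    set g1 : ℝ → ℝ := fun t => x t 1 with hg1def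
    set v : ℝ → ℝ := fun t => f t + g1 t + u t with hvdef
    have hf2 : MemLp f 2 (volume.restrict (Set.Ioi 0)) :=
      (ContinuousLinearMap.proj (R := ℝ) (φ := fun _ : Fin 2 => ℝ) 0).comp_memLp' hx2
    have hg2 : MemLp g1 2 (volume.restrict (Set.Ioi 0)) :=
      (ContinuousLinearMap.proj (R := ℝ) (φ := fun _ : Fin 2 => ℝ) 1).comp_memLp' hx2
    have hv2 : MemLp v 2 (volume.restrict (Set.Ioi 0)) := (hf2.add hg2).add hu2
    have hfsq : Integrable (fun t => f t ^ 2) (volume.restrict (Set.Ioi 0)) :=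
      (memLp_two_iff_integrable_sq hf2.aestronglyMeasurable).1 hf2
    have hvsq : Integrable (fun t => v t ^ 2) (volume.restrict (Set.Ioi 0)) :=
      (memLp_two_iff_integrable_sq hv2.aestronglyMeasurable).1 hv2
    have hQeq : ∀ t, Qex (x t 0) (x t 1) (u t) = (v t ^ 2 + f t ^ 2) / 2 := by
      intro t
      simp only [Qex, hvdef, hfdef, hg1def]
      ring
    have hQint : IntegrableOn (fun t => Qex (x t 0) (x t 1) (u t)) (Set.Ioi 0) := by
      refine ((hvsq.add hfsq).div_const 2).congr ?_
      filter_upwards with t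
      exact (hQeq t).symm
    have hfc : ContinuousOn f (Set.Ici 0) := (continuous_apply 0).comp_continuousOn hx_cont
    have hg1c : ContinuousOn g1 (Set.Ici 0) := (continuous_apply 1).comp_continuousOn hx_cont
    -- key estimate for every T > 0
    have hmain : ∀ T : ℝ, 0 < T →
        x₁0 ^ 2 / 2 - f T ^ 2 / 2 ≤ ∫ t in Set.Ioi (0:ℝ), Qex (x t 0) (x t 1) (u t) := by
      intro T hT
      have hIccIci : Set.Icc (0:ℝ) T ⊆ Set.Ici 0 := fun y hy => hy.1
      have huT : IntegrableOn u (Set.Ioc 0 T) :=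
        (hu_loc.integrableOn_compact_subset hIccIci isCompact_Icc).mono_set
          Set.Ioc_subset_Icc_self
      have hfT : IntegrableOn f (Set.Ioc 0 T) :=
        ((hfc.mono hIccIci).integrableOn_Icc).mono_set Set.Ioc_subset_Icc_self
      have hg1T : IntegrableOn g1 (Set.Ioc 0 T) :=
        ((hg1c.mono hIccIci).integrableOn_Icc).mono_set Set.Ioc_subset_Icc_self
      have hvT : IntegrableOn v (Set.Ioc 0 T) := (hfT.add hg1T).add huT
      -- the integral equation for the first component
      have hfeq : ∀ s ∈ Set.Icc (0:ℝ) T, f s = x₁0 + ∫ r in Set.Ioc (0:ℝ) s, v r := by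
        intro s hs
        have hs0 : (0:ℝ) ≤ s := hs.1
        have hpair : IntegrableOn (fun r => ![v r, g1 r]) (Set.Ioc 0 s) := by
          refine integrableOn_pair (hvT.mono_set ?_) (hg1T.mono_set ?_) <;>
            exact Set.Ioc_subset_Ioc_right hs.2
        have h1 := heq s hs0
        have h2 : x s 0 = x₁0 + (∫ r in (0:ℝ)..s, ![x r 0 + x r 1 + u r, x r 1]) 0 := by
          rw [h1]
          simp
        have h3 : (∫ r in (0:ℝ)..s, ![x r 0 + x r 1 + u r, x r 1])
            = ∫ r in Set.Ioc (0:ℝ) s, ![v r, g1 r] := by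
          rw [intervalIntegral.integral_of_le hs0]
        have h4 : (∫ r in Set.Ioc (0:ℝ) s, ![v r, g1 r]) 0
            = ∫ r in Set.Ioc (0:ℝ) s, v r := by
          have := (ContinuousLinearMap.proj (R := ℝ) (φ := fun _ : Fin 2 => ℝ) 0).integral_comp_comm hpair
          simpa using this.symm
        show x s 0 = x₁0 + ∫ r in Set.Ioc (0:ℝ) s, v r
        rw [h2, h3, h4]
      obtain ⟨hIfv, hid⟩ := sq_identity v f hvT hT.le hfeq
      have hQT : IntegrableOn (fun t => Qex (x t 0) (x t 1) (u t)) (Set.Ioc 0 T) :=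
        hQint.mono_set Set.Ioc_subset_Ioi_self
      have hnn : 0 ≤ ∫ t in Set.Ioc (0:ℝ) T, (Qex (x t 0) (x t 1) (u t) + f t * v t) := by
        refine setIntegral_nonneg measurableSet_Ioc fun t _ => ?_
        have hrw : Qex (x t 0) (x t 1) (u t) + f t * v t = (v t + f t) ^ 2 / 2 := by
          rw [hQeq t]; ring
        rw [hrw]
        positivity
      rw [integral_add hQT hIfv, hid] at hnn
      have hmono : ∫ t in Set.Ioc (0:ℝ) T, Qex (x t 0) (x t 1) (u t)
          ≤ ∫ t in Set.Ioi (0:ℝ), Qex (x t 0) (x t 1) (u t) := by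
        refine setIntegral_mono_set hQint ?_ ?_
        · filter_upwards with t using by rw [hQeq t]; positivity
        · exact HasSubset.Subset.eventuallyLE Set.Ioc_subset_Ioi_self
      linarith
    -- conclude via an ε-argument
    refine le_of_forall_pos_le_add fun ε hε => ?_
    obtain ⟨T, hT, hfT⟩ : ∃ T : ℝ, 0 < T ∧ f T ^ 2 ≤ 2 * ε := by
      by_contra h
      push_neg at h
      have hsub : Set.Ioi (0:ℝ) ⊆ {t | 2 * ε ≤ f t ^ 2} := fun t ht => (h t ht).le
      have hlt := hfsq.measure_ge_lt_top (by linarith : (0:ℝ) < 2 * ε)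
      rw [Measure.restrict_apply' measurableSet_Ioi] at hlt
      have : volume ({a | 2 * ε ≤ f a ^ 2} ∩ Set.Ioi 0) = ⊤ := by
        rw [Set.inter_eq_right.2 hsub]
        exact Real.volume_Ioi
      rw [this] at hlt
      exact absurd hlt (by simp)
    have := hmain T hT
    linarith
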